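/- Extremal welfare values over the lower-bound family: Fix λ ∈ (0,1). Then min_{ε ∈ [−1,1]} min( W^ε(1/4), W^ε(1) ) = W^1(1/4), max_{ε ∈ [−1,1]} max_{x ∈ (1/2, 3/4]} W^ε(x) = W^{−1}(3/4), and W^1(1/4) − W^{−1}(3/4) = (1/8)·(1−λ)/(4−3λ) > 0. -/

import Mathlib

open Set MeasureTheory

/-- Demand function of a Borel probability measure `μ` on `[0,1]`:
`D_μ(x) = μ({v : v ≥ x})`. -/
noncomputable def Dem (μ : Measure ℝ) (x : ℝ) : ℝ := (μ {v | x ≤ v}).toReal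

/-- Expected social welfare: `W_μ(x) = x·D_μ(x) + λ·∫_x^1 D_μ(t) dt`. -/
noncomputable def EW (lam : ℝ) (μ : Measure ℝ) (x : ℝ) : ℝ :=
  x * Dem μ x + lam * ∫ t in x..1, Dem μ t

/-- `a(λ)` from the lower-bound construction. -/
noncomputable def aC (lam : ℝ) : ℝ :=
  (1 - lam) * (136 - 99 * lam) / (2 * (4 - 3 * lam) * (24 - 17 * lam))

/-- `b(λ)` from the lower-bound construction. -/
noncomputable def bC (lam : ℝ) : ℝ := (1 - lam) / (2 * (24 - 17 * lam))

/-- The measure `μ^ε` on `[0,1]` with atoms at `1/4, 1/2, 3/4, 1` of masses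
`a, (1+ε)b, (1−ε)b, 1−a−2b` respectively. -/
noncomputable def muEps (lam ε : ℝ) : Measure ℝ :=
  ENNReal.ofReal (aC lam) • Measure.dirac (1/4)
    + ENNReal.ofReal ((1 + ε) * bC lam) • Measure.dirac (1/2)
    + ENNReal.ofReal ((1 - ε) * bC lam) • Measure.dirac (3/4)
    + ENNReal.ofReal (1 - aC lam - 2 * bC lam) • Measure.dirac 1

/-- Extremal welfare values over the lower-bound family: for `λ ∈ (0,1)`,
`min_{ε∈[−1,1]} min(W^ε(1/4), W^ε(1)) = W^1(1/4)`,
`max_{ε∈[−1,1]} max_{x∈(1/2,3/4]} W^ε(x) = W^{−1}(3/4)`, and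
`W^1(1/4) − W^{−1}(3/4) = (1/8)(1−λ)/(4−3λ) > 0`. -/
lemma Dem_muEps (lam ε x : ℝ) (ha : 0 ≤ aC lam) (h1 : 0 ≤ (1 + ε) * bC lam)
    (h2 : 0 ≤ (1 - ε) * bC lam) (hc : 0 ≤ 1 - aC lam - 2 * bC lam) :
    Dem (muEps lam ε) x =
      (if x ≤ 1/4 then aC lam else 0) + (if x ≤ 1/2 then (1 + ε) * bC lam else 0)
      + (if x ≤ 3/4 then (1 - ε) * bC lam else 0)
      + (if x ≤ 1 then 1 - aC lam - 2 * bC lam else 0) := by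
  have hset : {v : ℝ | x ≤ v} = Ici x := rfl
  have h0 : ∀ (p : Prop) [Decidable p] (m : ℝ),
      (if p then ENNReal.ofReal m else 0) = ENNReal.ofReal (if p then m else 0) := by
    intro p _ m; split <;> simp
  have n : ∀ (p : Prop) [Decidable p] (m : ℝ), 0 ≤ m → 0 ≤ (if p then m else 0) := by
    intro p _ m hm; split <;> simp [hm]
  unfold Dem muEps
  rw [hset, Measure.add_apply, Measure.add_apply, Measure.add_apply]
  simp only [Measure.smul_apply, smul_eq_mul, Measure.dirac_apply' _ measurableSet_Ici,
    Set.indicator_apply, mem_Ici, Pi.one_apply, mul_ite, mul_one, mul_zero]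
  rw [h0, h0, h0, h0, ← ENNReal.ofReal_add (n _ _ ha) (n _ _ h1),
    ← ENNReal.ofReal_add (add_nonneg (n _ _ ha) (n _ _ h1)) (n _ _ h2),
    ← ENNReal.ofReal_add (add_nonneg (add_nonneg (n _ _ ha) (n _ _ h1)) (n _ _ h2)) (n _ _ hc),
    ENNReal.toReal_ofReal (by positivity)]


lemma integ_const (f : ℝ → ℝ) {p q : ℝ} (C : ℝ) (hpq : p ≤ q) (h : ∀ t ∈ Ioc p q, f t = C) :
    ∫ t in p..q, f t = (q - p) * C := by
  rw [intervalIntegral.integral_of_le hpq, setIntegral_congr_fun measurableSet_Ioc h,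
    setIntegral_const, Real.volume_real_Ioc_of_le hpq, smul_eq_mul]

lemma intInteg_const (f : ℝ → ℝ) {p q : ℝ} (C : ℝ) (hpq : p ≤ q) (h : ∀ t ∈ Ioc p q, f t = C) :
    IntervalIntegrable f volume p q := by
  rw [intervalIntegrable_iff_integrableOn_Ioc_of_le hpq]
  exact ((integrableOn_const_iff (C := C)).2 (Or.inr measure_Ioc_lt_top)).congr_fun
    (fun t ht => (h t ht).symm) measurableSet_Ioc

section
variable {lam ε : ℝ} (ha : 0 ≤ aC lam) (h1 : 0 ≤ (1 + ε) * bC lam)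
  (h2 : 0 ≤ (1 - ε) * bC lam) (hc : 0 ≤ 1 - aC lam - 2 * bC lam)

include ha h1 h2 hc

lemma e1 : ∀ t ∈ Ioc (1/4:ℝ) (1/2), Dem (muEps lam ε) t
    = (1 + ε) * bC lam + (1 - ε) * bC lam + (1 - aC lam - 2 * bC lam) := by
  intro t ht
  rw [Dem_muEps lam ε t ha h1 h2 hc, if_neg (by linarith [ht.1]), if_pos ht.2,
    if_pos (by linarith [ht.2]), if_pos (by linarith [ht.2])]
  ring

lemma e2 : ∀ t ∈ Ioc (1/2:ℝ) (3/4), Dem (muEps lam ε) t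
    = (1 - ε) * bC lam + (1 - aC lam - 2 * bC lam) := by
  intro t ht
  rw [Dem_muEps lam ε t ha h1 h2 hc, if_neg (by linarith [ht.1]), if_neg (by linarith [ht.1]),
    if_pos ht.2, if_pos (by linarith [ht.2])]
  ring

lemma e3 : ∀ t ∈ Ioc (3/4:ℝ) 1, Dem (muEps lam ε) t = 1 - aC lam - 2 * bC lam := by
  intro t ht
  rw [Dem_muEps lam ε t ha h1 h2 hc, if_neg (by linarith [ht.1]), if_neg (by linarith [ht.1]),
    if_neg (by linarith [ht.1]), if_pos ht.2]
  ring

lemma EW_one : EW lam (muEps lam ε) 1 = 1 - aC lam - 2 * bC lam := by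
  rw [EW, intervalIntegral.integral_same, Dem_muEps lam ε 1 ha h1 h2 hc]
  norm_num

lemma EW_quarter : EW lam (muEps lam ε) (1/4)
    = 1/4 + lam * ((3 - ε) * bC lam + 3 * (1 - aC lam - 2 * bC lam)) / 4 := by
  have J1 := intInteg_const _ _ (by norm_num) (e1 ha h1 h2 hc)
  have J2 := intInteg_const _ _ (by norm_num) (e2 ha h1 h2 hc)
  have J3 := intInteg_const _ _ (by norm_num) (e3 ha h1 h2 hc)
  have I1 := integ_const _ _ (by norm_num) (e1 ha h1 h2 hc)
  have I2 := integ_const _ _ (by norm_num) (e2 ha h1 h2 hc)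
  have I3 := integ_const _ _ (by norm_num) (e3 ha h1 h2 hc)
  rw [EW, ← intervalIntegral.integral_add_adjacent_intervals J1 (J2.trans J3),
    ← intervalIntegral.integral_add_adjacent_intervals J2 J3, I1, I2, I3,
    Dem_muEps lam ε _ ha h1 h2 hc, if_pos (by norm_num), if_pos (by norm_num),
    if_pos (by norm_num), if_pos (by norm_num)]
  ring

lemma EW_mid {x : ℝ} (hx : x ∈ Ioc (1/2:ℝ) (3/4)) : EW lam (muEps lam ε) x
    = x * ((1 - ε) * bC lam + (1 - aC lam - 2 * bC lam))
      + lam * ((3/4 - x) * ((1 - ε) * bC lam + (1 - aC lam - 2 * bC lam))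
        + 1/4 * (1 - aC lam - 2 * bC lam)) := by
  have e2' : ∀ t ∈ Ioc x (3/4:ℝ), Dem (muEps lam ε) t
      = (1 - ε) * bC lam + (1 - aC lam - 2 * bC lam) := fun t ht =>
    e2 ha h1 h2 hc t ⟨lt_trans hx.1 ht.1, ht.2⟩
  have J2 := intInteg_const _ _ hx.2 e2'
  have J3 := intInteg_const _ _ (by norm_num) (e3 ha h1 h2 hc)
  have I2 := integ_const _ _ hx.2 e2'
  have I3 := integ_const _ _ (by norm_num) (e3 ha h1 h2 hc)
  rw [EW, ← intervalIntegral.integral_add_adjacent_intervals J2 J3, I2, I3,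
    Dem_muEps lam ε _ ha h1 h2 hc, if_neg (by linarith [hx.1]), if_neg (by linarith [hx.1]),
    if_pos hx.2, if_pos (by linarith [hx.2])]
  ring

end


set_option maxHeartbeats 1000000 in
theorem extremal_welfare_lower_bound_family (lam : ℝ) (hlam : lam ∈ Ioo (0:ℝ) 1) :
    (⨅ ε : Icc (-1:ℝ) 1,
        min (EW lam (muEps lam ε.1) (1/4)) (EW lam (muEps lam ε.1) 1))
      = EW lam (muEps lam 1) (1/4) ∧
    (⨆ ε : Icc (-1:ℝ) 1, ⨆ x : Ioc (1/2 : ℝ) (3/4), EW lam (muEps lam ε.1) x.1)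
      = EW lam (muEps lam (-1)) (3/4) ∧
    EW lam (muEps lam 1) (1/4) - EW lam (muEps lam (-1)) (3/4)
      = 1/8 * ((1 - lam) / (4 - 3 * lam)) ∧
    0 < 1/8 * ((1 - lam) / (4 - 3 * lam)) := by
  obtain ⟨hl0, hl1⟩ := hlam
  have h4 : (0:ℝ) < 4 - 3 * lam := by linarith
  have h24 : (0:ℝ) < 24 - 17 * lam := by linarith
  have ha : 0 ≤ aC lam := by
    unfold aC; apply div_nonneg (by nlinarith) (by positivity)
  have hb : 0 ≤ bC lam := by
    unfold bC; apply div_nonneg (by linarith) (by positivity)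
  have hceq : 1 - aC lam - 2 * bC lam
      = (48 - 31 * lam - 3 * lam ^ 2) / (2 * (4 - 3 * lam) * (24 - 17 * lam)) := by
    unfold aC bC; field_simp [(by linarith : (0:ℝ) < 4 - lam * 3).ne', (by linarith : (0:ℝ) < 24 - lam * 17).ne']; ring
  have hc : 0 ≤ 1 - aC lam - 2 * bC lam := by
    rw [hceq]; apply div_nonneg (by nlinarith) (by positivity)
  have hm1 : ∀ ε : ℝ, ε ∈ Icc (-1:ℝ) 1 → 0 ≤ (1 + ε) * bC lam :=
    fun ε hε => mul_nonneg (by linarith [hε.1]) hb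
  have hm2 : ∀ ε : ℝ, ε ∈ Icc (-1:ℝ) 1 → 0 ≤ (1 - ε) * bC lam :=
    fun ε hε => mul_nonneg (by linarith [hε.2]) hb
  have mem1 : (1:ℝ) ∈ Icc (-1:ℝ) 1 := by constructor <;> norm_num
  have memm1 : (-1:ℝ) ∈ Icc (-1:ℝ) 1 := by constructor <;> norm_num
  have mem34 : (3/4:ℝ) ∈ Ioc (1/2:ℝ) (3/4) := by constructor <;> norm_num
  -- key inequalities
  have K1 : ∀ ε : Icc (-1:ℝ) 1,
      EW lam (muEps lam 1) (1/4) ≤ EW lam (muEps lam ε.1) (1/4) := by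
    intro ε
    rw [EW_quarter ha (hm1 1 mem1) (hm2 1 mem1) hc,
      EW_quarter ha (hm1 ε.1 ε.2) (hm2 ε.1 ε.2) hc]
    nlinarith [mul_nonneg (mul_nonneg hl0.le (by linarith [ε.2.2] : (0:ℝ) ≤ 1 - ε.1)) hb]
  have K2 : EW lam (muEps lam 1) (1/4) ≤ 1 - aC lam - 2 * bC lam := by
    have key : (1 - aC lam - 2 * bC lam) - EW lam (muEps lam 1) (1/4)
        = lam * (1 - lam) / (8 * (24 - 17 * lam)) := by
      rw [EW_quarter ha (hm1 1 mem1) (hm2 1 mem1) hc]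
      unfold aC bC; field_simp [(by linarith : (0:ℝ) < 4 - lam * 3).ne', (by linarith : (0:ℝ) < 24 - lam * 17).ne']; ring
    nlinarith [div_nonneg (mul_nonneg hl0.le (by linarith : (0:ℝ) ≤ 1 - lam))
      (by positivity : (0:ℝ) ≤ 8 * (24 - 17 * lam))]
  have K3 : ∀ (ε : Icc (-1:ℝ) 1) (x : Ioc (1/2:ℝ) (3/4)),
      EW lam (muEps lam ε.1) x.1 ≤ EW lam (muEps lam (-1)) (3/4) := by
    intro ε x
    rw [EW_mid ha (hm1 ε.1 ε.2) (hm2 ε.1 ε.2) hc x.2,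
      EW_mid ha (hm1 (-1) memm1) (hm2 (-1) memm1) hc mem34]
    have hs : (0:ℝ) ≤ (1 - ε.1) * bC lam + (1 - aC lam - 2 * bC lam) :=
      add_nonneg (hm2 ε.1 ε.2) hc
    have hv : (0:ℝ) ≤ (3/4 - x.1) * (1 - lam) :=
      mul_nonneg (by linarith [x.2.2]) (by linarith)
    nlinarith [mul_nonneg hs hv, hm1 ε.1 ε.2]
  have K4 : EW lam (muEps lam 1) (1/4) - EW lam (muEps lam (-1)) (3/4)
      = 1/8 * ((1 - lam) / (4 - 3 * lam)) := by
    rw [EW_quarter ha (hm1 1 mem1) (hm2 1 mem1) hc,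
      EW_mid ha (hm1 (-1) memm1) (hm2 (-1) memm1) hc mem34]
    unfold aC bC; field_simp [(by linarith : (0:ℝ) < 4 - lam * 3).ne', (by linarith : (0:ℝ) < 24 - lam * 17).ne']; ring
  have K5 : 0 < 1/8 * ((1 - lam) / (4 - 3 * lam)) := by
    apply mul_pos (by norm_num) (div_pos (by linarith) h4)
  haveI : Nonempty (Icc (-1:ℝ) 1) := ⟨⟨1, mem1⟩⟩
  haveI : Nonempty (Ioc (1/2:ℝ) (3/4)) := ⟨⟨3/4, mem34⟩⟩
  refine ⟨?_, ?_, K4, K5⟩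
  · have bdd : ∀ ε : Icc (-1:ℝ) 1, EW lam (muEps lam 1) (1/4)
        ≤ min (EW lam (muEps lam ε.1) (1/4)) (EW lam (muEps lam ε.1) 1) := by
      intro ε
      refine le_min (K1 ε) ?_
      rw [EW_one ha (hm1 ε.1 ε.2) (hm2 ε.1 ε.2) hc]
      exact K2
    apply le_antisymm _ (le_ciInf bdd)
    calc (⨅ ε : Icc (-1:ℝ) 1,
            min (EW lam (muEps lam ε.1) (1/4)) (EW lam (muEps lam ε.1) 1))
        ≤ min (EW lam (muEps lam 1) (1/4)) (EW lam (muEps lam 1) 1) :=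
          ciInf_le (f := fun ε : Icc (-1:ℝ) 1 =>
              min (EW lam (muEps lam ε.1) (1/4)) (EW lam (muEps lam ε.1) 1))
            ⟨_, by rintro _ ⟨ε, rfl⟩; exact bdd ε⟩ ⟨1, mem1⟩
      _ = EW lam (muEps lam 1) (1/4) := by
          apply min_eq_left
          rw [EW_one ha (hm1 1 mem1) (hm2 1 mem1) hc]
          exact K2
  · apply le_antisymm (ciSup_le fun ε => ciSup_le fun x => K3 ε x)
    have bddA : ∀ ε : Icc (-1:ℝ) 1,
        (⨆ x : Ioc (1/2:ℝ) (3/4), EW lam (muEps lam ε.1) x.1)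
          ≤ EW lam (muEps lam (-1)) (3/4) := fun ε => ciSup_le fun x => K3 ε x
    calc EW lam (muEps lam (-1)) (3/4)
        ≤ ⨆ x : Ioc (1/2:ℝ) (3/4), EW lam (muEps lam (-1)) x.1 :=
          le_ciSup (f := fun x : Ioc (1/2:ℝ) (3/4) => EW lam (muEps lam (-1)) x.1)
            ⟨_, by rintro _ ⟨x, rfl⟩; exact K3 ⟨-1, memm1⟩ x⟩ ⟨3/4, mem34⟩
      _ ≤ ⨆ ε : Icc (-1:ℝ) 1, ⨆ x : Ioc (1/2:ℝ) (3/4), EW lam (muEps lam ε.1) x.1 :=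
          le_ciSup (f := fun ε : Icc (-1:ℝ) 1 =>
              ⨆ x : Ioc (1/2:ℝ) (3/4), EW lam (muEps lam ε.1) x.1)
            ⟨_, by rintro _ ⟨ε, rfl⟩; exact bddA ε⟩ ⟨-1, memm1⟩
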